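/- In the alternating-offers negotiation over m outcomes where no offer can be repeated and the last remaining outcome is accepted, each party can guarantee (by rejecting appropriately) that the final accepted outcome is not among her floor(m/2) lowest-ranked outcomes if she is the responder in round 1, nor among her floor(m/2) (m odd) or m/2 − 1 (m even) lowest-ranked outcomes if she is the proposer in round 1. Consequently, if both parties are rational, the negotiation result lies outside Low_1 = L_1^1 ∪ L_1^2. -/
import Mathlib


def respSize (m : ℕ) : ℕ := m / 2

def propSize (m : ℕ) : ℕ := if m % 2 = 1 then m / 2 else m / 2 - 1

def IsLowSet {α : Type*} (O : Finset α) (r : α → ℕ) (n : ℕ) (L : Finset α) : Prop :=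
  L ⊆ O ∧ L.card = n ∧ ∀ a ∈ L, ∀ b ∈ O, b ∉ L → r a < r b

/-- A strategy in the VAOV game: an offering rule and a response (accept?) rule. -/
abbrev NegStrat (α : Type*) := (Finset α → α) × (Finset α → α → Bool)

/-- The outcome of the VAOV game from the set `O` of available outcomes, where `S1`
is the strategy of the current proposer and `S2` that of the current responder:
if one outcome remains it is accepted; otherwise the proposer offers, and the
responder either accepts or rejects, in which case roles switch and the offer is
removed. (Invalid offers return junk; they never occur for valid strategies.) -/
noncomputable def play {α : Type*} [DecidableEq α] [Inhabited α]
    (S1 S2 : NegStrat α) (O : Finset α) : α :=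
  if O.card ≤ 1 then (if h : O.Nonempty then Classical.choose h else default)
  else if ho : S1.1 O ∈ O then
    (if S2.2 O (S1.1 O) = true then S1.1 O else play S2 S1 (O.erase (S1.1 O)))
  else default
termination_by O.card
decreasing_by exact Finset.card_erase_lt_of_mem ho

/-- A strategy always offers an available outcome. -/
def ValidStrat {α : Type*} (S : NegStrat α) : Prop :=
  ∀ O : Finset α, O.Nonempty → S.1 O ∈ O


noncomputable def avoidStrat {α : Type*} [DecidableEq α] [Inhabited α] (L : Finset α) :
    NegStrat α :=
  (fun O => if h : (O \ L).Nonempty then h.choose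
            else if h' : O.Nonempty then h'.choose else default,
   fun _ x => decide (x ∉ L))

lemma avoidStrat_valid {α : Type*} [DecidableEq α] [Inhabited α] (L : Finset α) :
    ValidStrat (avoidStrat L) := by
  intro O hO
  simp only [avoidStrat]
  split
  · next h => exact (Finset.mem_sdiff.mp h.choose_spec).1
  · exact hO.choose_spec

lemma avoid_key {α : Type*} [DecidableEq α] [Inhabited α] (L : Finset α) :
    ∀ n (O : Finset α), O.card = n → O.Nonempty →
      ((L ∩ O).card ≤ respSize O.card →
        ∀ S1 : NegStrat α, ValidStrat S1 → play S1 (avoidStrat L) O ∉ L) ∧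
      ((L ∩ O).card ≤ propSize O.card →
        ∀ S2 : NegStrat α, ValidStrat S2 → play (avoidStrat L) S2 O ∉ L) := by
  intro n
  induction n using Nat.strong_induction_on with
  | _ n ih =>
    intro O hcard hne
    rcases le_or_gt O.card 1 with hle | hgt
    · -- one element left
      have h1 : O.card = 1 := le_antisymm hle (Finset.card_pos.mpr hne)
      have hresult : ∀ S1 S2 : NegStrat α, play S1 S2 O ∉ L → True := fun _ _ _ => trivial
      have hmain : ∀ S1 S2 : NegStrat α, L ∩ O = ∅ → play S1 S2 O ∉ L := by
        intro S1 S2 h0 hmem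
        rw [play, if_pos hle, dif_pos hne] at hmem
        have hin : Classical.choose hne ∈ O := Classical.choose_spec hne
        have : Classical.choose hne ∈ L ∩ O := Finset.mem_inter.mpr ⟨hmem, hin⟩
        simp [h0] at this
      constructor
      · intro hc S1 _
        exact hmain _ _ (by simpa [respSize, h1, Finset.card_eq_zero] using hc)
      · intro hc S2 _
        exact hmain _ _ (by simpa [propSize, h1, Finset.card_eq_zero] using hc)
    · -- at least two elements
      have hnle : ¬ O.card ≤ 1 := by omega
      constructor
      · -- responder
        intro hc S1 hS1
        have hx : S1.1 O ∈ O := hS1 O hne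
        rw [play, if_neg hnle, dif_pos hx]
        by_cases hxL : S1.1 O ∈ L
        · have hrej : (avoidStrat L).2 O (S1.1 O) ≠ true := by
            simp [avoidStrat, hxL]
          rw [if_neg hrej]
          have hxLO : S1.1 O ∈ L ∩ O := Finset.mem_inter.mpr ⟨hxL, hx⟩
          have hcard' : (O.erase (S1.1 O)).card = O.card - 1 :=
            Finset.card_erase_of_mem hx
          have hne' : (O.erase (S1.1 O)).Nonempty := by
            rw [← Finset.card_pos, hcard']; omega
          have hLcard : (L ∩ O.erase (S1.1 O)).card = (L ∩ O).card - 1 := by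
            rw [Finset.inter_erase, Finset.card_erase_of_mem hxLO]
          have hb : (L ∩ O.erase (S1.1 O)).card ≤ propSize (O.erase (S1.1 O)).card := by
            rw [hLcard, hcard']
            have h1 : 1 ≤ (L ∩ O).card := Finset.card_pos.mpr ⟨_, hxLO⟩
            simp only [respSize] at hc
            simp only [propSize]
            split <;> omega
          exact (ih (O.card - 1) (by omega) _ hcard' hne').2 hb S1 hS1
        · have hacc : (avoidStrat L).2 O (S1.1 O) = true := by
            simp [avoidStrat, hxL]
          rw [if_pos hacc]
          exact hxL
      · -- proposer
        intro hc S2 hS2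
        have hOL : (O \ L).Nonempty := by
          rw [Finset.sdiff_nonempty]
          intro hsub
          have : L ∩ O = O := by
            apply Finset.inter_eq_right.mpr hsub
          rw [this] at hc
          simp only [propSize] at hc
          rcases Nat.lt_or_ge O.card 2 with h|h
          · omega
          · revert hc; split <;> omega
        have hxdef : (avoidStrat L).1 O = hOL.choose := by
          simp only [avoidStrat, dif_pos hOL]
        have hxspec := hOL.choose_spec
        rw [Finset.mem_sdiff] at hxspec
        have hx : (avoidStrat L).1 O ∈ O := by rw [hxdef]; exact hxspec.1
        have hxL : (avoidStrat L).1 O ∉ L := by rw [hxdef]; exact hxspec.2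
        rw [play, if_neg hnle, dif_pos hx]
        by_cases hacc : S2.2 O ((avoidStrat L).1 O) = true
        · rw [if_pos hacc]; exact hxL
        · rw [if_neg hacc]
          have hcard' : (O.erase ((avoidStrat L).1 O)).card = O.card - 1 :=
            Finset.card_erase_of_mem hx
          have hne' : (O.erase ((avoidStrat L).1 O)).Nonempty := by
            rw [← Finset.card_pos, hcard']; omega
          have hLeq : L ∩ O.erase ((avoidStrat L).1 O) = L ∩ O := by
            rw [Finset.inter_erase, Finset.erase_eq_of_notMem]
            intro h
            exact hxL (Finset.mem_inter.mp h).1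
          have hb : (L ∩ O.erase ((avoidStrat L).1 O)).card ≤
              respSize (O.erase ((avoidStrat L).1 O)).card := by
            rw [hLeq, hcard']
            simp only [propSize] at hc
            simp only [respSize]
            revert hc; split <;> omega
          exact (ih (O.card - 1) (by omega) _ hcard' hne').1 hb S2 hS2

/-- in the VAOV game, the first mover can guarantee that the result is
not among her `propSize m` lowest-ranked outcomes, and the second mover can
guarantee that the result is not among her `respSize m` lowest-ranked outcomes;
consequently, if both are rational the result lies outside `L_1^1 ∪ L_1^2`. -/
theorem guarantee_result_outside_lower_sets {α : Type*} [DecidableEq α] [Inhabited α]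
    (O : Finset α) (hO : O.Nonempty) (r1 r2 : α → ℕ)
    (h1 : Set.InjOn r1 O) (h2 : Set.InjOn r2 O) (L1 L2 : Finset α)
    (hL1 : IsLowSet O r1 (propSize O.card) L1)
    (hL2 : IsLowSet O r2 (respSize O.card) L2) :
    (∃ S1 : NegStrat α, ValidStrat S1 ∧
      ∀ S2 : NegStrat α, ValidStrat S2 → play S1 S2 O ∉ L1) ∧
    (∃ S2 : NegStrat α, ValidStrat S2 ∧
      ∀ S1 : NegStrat α, ValidStrat S1 → play S1 S2 O ∉ L2) := by
  have hcL1 : L1 ∩ O = L1 := Finset.inter_eq_left.mpr hL1.1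
  have hcL2 : L2 ∩ O = L2 := Finset.inter_eq_left.mpr hL2.1
  constructor
  · exact ⟨avoidStrat L1, avoidStrat_valid L1, fun S2 hS2 =>
      (avoid_key L1 O.card O rfl hO).2 (by rw [hcL1, hL1.2.1]) S2 hS2⟩
  · exact ⟨avoidStrat L2, avoidStrat_valid L2, fun S1 hS1 =>
      (avoid_key L2 O.card O rfl hO).1 (by rw [hcL2, hL2.2.1]) S1 hS1⟩
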